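/- Let V be an 𝔽₂-vector space and i ≥ j ≥ 1 integers. Then Π_{i,j} + Π′_{i,j} = (i + j) · id as endomorphisms of Λ^i(V) ⊗ Λ^j(V) (where the natural number scalar i + j acts mod 2: the sum is the identity if i + j is odd and zero if i + j is even). -/
import Mathlib


open scoped TensorProduct

noncomputable section

abbrev F2 := ZMod 2

variable {V : Type*} [AddCommGroup V] [Module F2 V]

/-- The wedge `x₁ ∧ ⋯ ∧ xₙ` of a family of vectors, as an element of the `n`-th exterior
power `⋀[𝔽₂]^n V`. -/
def wedge (n : ℕ) (x : Fin n → V) : ⋀[F2]^n V :=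
  ⟨ExteriorAlgebra.ιMulti F2 n x,
    ExteriorAlgebra.ιMulti_range F2 n (Set.mem_range_self x)⟩

/-- `IsTheta i j t θ` says that
`θ : Λ^i(V) ⊗ Λ^j(V) → Λ^a(V) ⊗ Λ^b(V)` (where `a = i + t` and `b = j − t`) is the map
`θ_{i,j,t}` determined on decomposables by
`x ⊗ (b₁ ∧ ⋯ ∧ b_j) ↦ Σ_{|S| = t} (x ∧ b_S) ⊗ b_{Sᶜ}`,
the sum being over the `t`-element subsets `S` of `{1, …, j}` and `b_S` denoting the wedge
of the `b_s`, `s ∈ S`, in increasing order. -/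
def IsTheta (i j t : ℕ) {a b : ℕ} (ha : i + t = a) (hb : j - t = b)
    (θ : (⋀[F2]^i V) ⊗[F2] (⋀[F2]^j V) →ₗ[F2] (⋀[F2]^a V) ⊗[F2] (⋀[F2]^b V)) : Prop :=
  ∀ (x : Fin i → V) (y : Fin j → V),
    θ (wedge i x ⊗ₜ wedge j y) =
      ∑ S ∈ (Finset.powersetCard t (Finset.univ : Finset (Fin j))).attach,
        wedge a (Fin.append x
            (y ∘ (S.1.orderEmbOfFin (Finset.mem_powersetCard.mp S.2).2)) ∘ Fin.cast ha.symm)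
          ⊗ₜ
        wedge b ((y ∘ ((S.1)ᶜ.orderEmbOfFin
            (by simp [Finset.card_compl, (Finset.mem_powersetCard.mp S.2).2]))) ∘
          Fin.cast hb.symm)

/-- `IsDTheta i j t Dθ` says that
`Dθ : Λ^a(V) ⊗ Λ^b(V) → Λ^i(V) ⊗ Λ^j(V)` (where `a = i + t` and `j = b + t`) is the dual
map `Dθ_{i,j,t}` determined on decomposables by
`(a₁ ∧ ⋯ ∧ a_{i+t}) ⊗ y ↦ Σ_{|S| = t} a_{Sᶜ} ⊗ (y ∧ a_S)`. -/
def IsDTheta (i j t : ℕ) {a b : ℕ} (ha : i + t = a) (hb : b + t = j)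
    (Dθ : (⋀[F2]^a V) ⊗[F2] (⋀[F2]^b V) →ₗ[F2] (⋀[F2]^i V) ⊗[F2] (⋀[F2]^j V)) : Prop :=
  ∀ (x : Fin a → V) (y : Fin b → V),
    Dθ (wedge a x ⊗ₜ wedge b y) =
      ∑ S ∈ (Finset.powersetCard t (Finset.univ : Finset (Fin a))).attach,
        wedge i ((x ∘ ((S.1)ᶜ.orderEmbOfFin
            (by simp [Finset.card_compl, (Finset.mem_powersetCard.mp S.2).2]))) ∘
          Fin.cast (by omega : i = a - t))
          ⊗ₜ
        wedge j (Fin.append y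
            (x ∘ (S.1.orderEmbOfFin (Finset.mem_powersetCard.mp S.2).2)) ∘ Fin.cast hb.symm)


namespace PiAux

def cEnum {n : ℕ} (p : Fin n) : Fin (n-1) → Fin n :=
  fun k => if (k : ℕ) < (p : ℕ) then ⟨k, by omega⟩ else ⟨k+1, by omega⟩

lemma cEnum_val {n : ℕ} (p : Fin n) (k : Fin (n-1)) :
    (cEnum p k : ℕ) = if (k : ℕ) < (p : ℕ) then (k:ℕ) else (k:ℕ)+1 := by
  simp only [cEnum]; split <;> rfl

lemma cEnum_strictMono {n : ℕ} (p : Fin n) : StrictMono (cEnum p) := by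
  intro a b hab
  rw [Fin.lt_def] at hab ⊢
  rw [cEnum_val, cEnum_val]
  split <;> split <;> omega

lemma cEnum_mem {n : ℕ} (p : Fin n) (k : Fin (n-1)) :
    cEnum p k ∈ ({p}ᶜ : Finset (Fin n)) := by
  simp only [Finset.mem_compl, Finset.mem_singleton]
  intro h
  have := congrArg Fin.val h
  rw [cEnum_val] at this
  split at this <;> omega

lemma orderEmbOfFin_compl_singleton {n : ℕ} (p : Fin n)
    (h : ({p}ᶜ : Finset (Fin n)).card = n - 1) :
    ⇑(({p}ᶜ : Finset (Fin n)).orderEmbOfFin h) = cEnum p :=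
  (Finset.orderEmbOfFin_unique h (fun k => cEnum_mem p k) (cEnum_strictMono p)).symm

def sigma1 {i : ℕ} (s : Fin i) : Fin i → Fin i :=
  fun k => if h : (k:ℕ) < i - 1 then cEnum s ⟨(k:ℕ), h⟩ else s

lemma sigma1_bij {i : ℕ} (s : Fin i) : Function.Bijective (sigma1 s) := by
  rw [Fintype.bijective_iff_injective_and_card]
  refine ⟨?_, rfl⟩
  have key : ∀ k : Fin i, ((sigma1 s k):ℕ)
      = if (k:ℕ) < i - 1 then (if (k:ℕ) < (s:ℕ) then (k:ℕ) else (k:ℕ)+1) else (s:ℕ) := by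
    intro k
    simp only [sigma1]
    split
    · rw [cEnum_val]
    · rfl
  intro a b hab
  have h := congrArg Fin.val hab
  rw [key, key] at h
  have ha := a.isLt; have hb := b.isLt; have hs := s.isLt
  ext
  split_ifs at h <;> omega

lemma append_apply {V : Type*} {m n : ℕ} (x : Fin m → V) (y : Fin n → V) (k : Fin (m+n)) :
    Fin.append x y k = if h : (k:ℕ) < m then x ⟨k, h⟩ else y ⟨(k:ℕ) - m, by omega⟩ := by
  split
  · next h =>
    have h2 := Fin.append_left x y ⟨k, h⟩
    rwa [show Fin.castAdd n ⟨(k:ℕ), h⟩ = k from by ext; simp] at h2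
  · next h =>
    have h2 := Fin.append_right (m := m) x y ⟨(k:ℕ) - m, by omega⟩
    rwa [show Fin.natAdd m ⟨(k:ℕ) - m, by omega⟩ = k from by ext; simp; omega] at h2

lemma sum_powersetCard_one {n : ℕ} {M : Type*} [AddCommMonoid M]
    (f : {S // S ∈ Finset.powersetCard 1 (Finset.univ : Finset (Fin n))} → M) :
    ∑ S ∈ (Finset.powersetCard 1 (Finset.univ : Finset (Fin n))).attach, f S
      = ∑ p : Fin n, f ⟨{p}, by simp⟩ := by
  symm
  apply Finset.sum_bij (i := fun (p : Fin n) _ =>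
    (⟨{p}, by simp⟩ : {S // S ∈ Finset.powersetCard 1 (Finset.univ : Finset (Fin n))}))
  · intro p _; exact Finset.mem_attach _ _
  · intro p _ q _ h
    simpa [Subtype.ext_iff] using h
  · intro S _
    obtain ⟨a, ha⟩ := Finset.card_eq_one.mp (Finset.mem_powersetCard.mp S.2).2
    exact ⟨a, Finset.mem_univ a, by simp [Subtype.ext_iff, ha]⟩
  · intro p _; rfl

variable {V : Type*} [AddCommGroup V] [Module F2 V]

lemma wedge_span (n : ℕ) :
    Submodule.span F2 (Set.range (wedge (V := V) n)) = ⊤ := by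
  apply Submodule.map_injective_of_injective (Submodule.injective_subtype (⋀[F2]^n V))
  rw [Submodule.map_span, Submodule.map_top, Submodule.range_subtype]
  have himg : (⋀[F2]^n V).subtype '' Set.range (wedge (V := V) n)
      = Set.range (ExteriorAlgebra.ιMulti F2 n (M := V)) := by
    ext z
    constructor
    · rintro ⟨-, ⟨x, rfl⟩, rfl⟩; exact ⟨x, rfl⟩
    · rintro ⟨x, rfl⟩; exact ⟨wedge n x, ⟨x, rfl⟩, rfl⟩
  rw [himg, ExteriorAlgebra.ιMulti_span_fixedDegree F2 n]

lemma wedge_comp_bijective {n : ℕ} (x : Fin n → V) (σ : Fin n → Fin n)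
    (hσ : Function.Bijective σ) : wedge n (x ∘ σ) = wedge n x := by
  have h := (ExteriorAlgebra.ιMulti F2 n).map_perm x (Equiv.ofBijective σ hσ)
  apply Subtype.ext
  show ExteriorAlgebra.ιMulti F2 n (x ∘ σ) = ExteriorAlgebra.ιMulti F2 n x
  have hc : x ∘ σ = x ∘ (Equiv.ofBijective σ hσ) := rfl
  rw [hc, h]
  rcases Int.units_eq_one_or (Equiv.Perm.sign (Equiv.ofBijective σ hσ)) with h1 | h1
  · rw [h1, one_smul]
  · rw [h1]
    set z := (ExteriorAlgebra.ιMulti F2 n) x with hz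
    have hzz : z + z = 0 := by
      have h2 := two_smul F2 z
      have h0 : (2 : F2) = 0 := rfl
      rw [h0, zero_smul] at h2
      exact h2.symm
    have hneg : (-1 : ℤˣ) • z = -z := by
      rw [Units.smul_def]
      norm_num
    rw [hneg, neg_eq_of_add_eq_zero_left hzz]

lemma tensor_ext {i j : ℕ} {W : Type*} [AddCommGroup W] [Module F2 W]
    {f g : (⋀[F2]^i V) ⊗[F2] (⋀[F2]^j V) →ₗ[F2] W}
    (h : ∀ x y, f (wedge i x ⊗ₜ[F2] wedge j y) = g (wedge i x ⊗ₜ[F2] wedge j y)) :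
    f = g := by
  apply TensorProduct.ext
  apply LinearMap.ext_on (wedge_span i)
  rintro _ ⟨x, rfl⟩
  apply LinearMap.ext_on (wedge_span j)
  rintro _ ⟨y, rfl⟩
  exact h x y

section normalforms
variable {i j : ℕ}

def Xf (x : Fin i → V) (s : Fin i) : Fin (i-1) → V := fun k => x (cEnum s k)

def Yf (x : Fin i → V) (y : Fin j → V) (s : Fin i) : Fin (j+1) → V :=
  fun m => if h : (m:ℕ) < j then y ⟨(m:ℕ), h⟩ else x s

def Cf (x : Fin i → V) (y : Fin j → V) (s : Fin i) (t : Fin j) : Fin i → V :=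
  fun k => if h : (k:ℕ) < i - 1 then x (cEnum s ⟨(k:ℕ), h⟩) else y t

omit [AddCommGroup V] [Module F2 V] in
lemma fun1 (x : Fin i → V) (y : Fin j → V) (s : Fin i) (t : Fin j) :
    (fun k : Fin i => if h : (k:ℕ) < i - 1 then Xf x s ⟨(k:ℕ), h⟩
        else Yf x y s (Fin.castSucc t)) = Cf x y s t := by
  funext k
  have ht := t.isLt
  simp only [Xf, Yf, Cf, Fin.coe_castSucc]
  split_ifs <;> first
    | rfl
    | (exact congrArg _ (Fin.ext (by simp)))
    | (exfalso; omega)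

omit [AddCommGroup V] [Module F2 V] in
lemma fun2 (x : Fin i → V) (y : Fin j → V) (s : Fin i) (t : Fin j)
    (q : Fin j → Fin (j+1-1)) (hq : ∀ m, ((q m : ℕ)) = (m : ℕ)) :
    (fun m : Fin j => Yf x y s (cEnum (Fin.castSucc t) (q m))) = Cf y x t s := by
  funext m
  have ht := t.isLt; have hm := m.isLt
  have hv : ((cEnum (Fin.castSucc t) (q m)):ℕ)
      = if (m:ℕ) < (t:ℕ) then (m:ℕ) else (m:ℕ)+1 := by
    rw [cEnum_val, hq m, Fin.coe_castSucc]
  simp only [Yf, Cf]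
  by_cases h : (m:ℕ) < j - 1
  · have hv2 : ((cEnum t (⟨(m:ℕ), h⟩ : Fin (j-1))):ℕ)
        = if (m:ℕ) < (t:ℕ) then (m:ℕ) else (m:ℕ)+1 := by rw [cEnum_val]
    rw [dif_pos h, dif_pos (show ((cEnum (Fin.castSucc t) (q m)):ℕ) < j by
      rw [hv]; split <;> omega)]
    exact congrArg y (Fin.ext (by rw [hv, hv2]))
  · have htm : ¬ (m:ℕ) < (t:ℕ) := by omega
    rw [dif_neg h, dif_neg (show ¬ ((cEnum (Fin.castSucc t) (q m)):ℕ) < j by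
      rw [hv, if_neg htm]; omega)]

omit [AddCommGroup V] [Module F2 V] in
lemma fun3 (x : Fin i → V) (y : Fin j → V) (s : Fin i) :
    (fun k : Fin i => if h : (k:ℕ) < i - 1 then Xf x s ⟨(k:ℕ), h⟩
        else Yf x y s (Fin.last j)) = x ∘ sigma1 s := by
  funext k
  simp only [Xf, Yf, Cf, sigma1, Function.comp_apply, Fin.val_last]
  split_ifs <;> first
    | rfl
    | (exfalso; omega)

omit [AddCommGroup V] [Module F2 V] in
lemma fun4 (x : Fin i → V) (y : Fin j → V) (s : Fin i)
    (q : Fin j → Fin (j+1-1)) (hq : ∀ m, ((q m : ℕ)) = (m : ℕ)) :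
    (fun m : Fin j => Yf x y s (cEnum (Fin.last j) (q m))) = y := by
  funext m
  have hm := m.isLt
  have hv : ((cEnum (Fin.last j) (q m)):ℕ) = (m:ℕ) := by
    rw [cEnum_val, hq m, Fin.val_last, if_pos hm]
  simp only [Yf]
  rw [dif_pos (show ((cEnum (Fin.last j) (q m)):ℕ) < j by omega)]
  exact congrArg y (Fin.ext (by rw [hv]))

end normalforms

lemma isTheta_one_apply {i j a b : ℕ} (ha : i + 1 = a) (hb : j - 1 = b) (hj : 1 ≤ j)
    {θ : (⋀[F2]^i V) ⊗[F2] (⋀[F2]^j V) →ₗ[F2] (⋀[F2]^a V) ⊗[F2] (⋀[F2]^b V)}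
    (hθ : IsTheta i j 1 ha hb θ) (x : Fin i → V) (y : Fin j → V) :
    θ (wedge i x ⊗ₜ wedge j y) =
      ∑ t : Fin j,
        wedge a (fun k => if h : (k:ℕ) < i then x ⟨k, h⟩ else y t) ⊗ₜ
        wedge b (fun m => y (cEnum t ⟨(m:ℕ), by omega⟩)) := by
  rw [hθ x y, sum_powersetCard_one]
  apply Finset.sum_congr rfl
  intro t _
  congr 1
  · congr 1
    funext k
    simp only [Function.comp_apply]
    rw [append_apply]
    simp only [Fin.coe_cast, Function.comp_apply]
    split
    · rfl
    · congr 1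
      have := Finset.orderEmbOfFin_mem ({t} : Finset (Fin j))
        (Finset.mem_powersetCard.mp (show ({t} : Finset (Fin j))
          ∈ Finset.powersetCard 1 Finset.univ by simp)).2
        ⟨(k : ℕ) - i, by omega⟩
      simpa using this
  · congr 1
    funext m
    simp only [Function.comp_apply]
    rw [orderEmbOfFin_compl_singleton]
    exact congrArg y (congrArg (cEnum t) (Fin.ext (by simp)))

lemma isDTheta_one_apply {i j a b : ℕ} (ha : i + 1 = a) (hb : b + 1 = j)
    {Dθ : (⋀[F2]^a V) ⊗[F2] (⋀[F2]^b V) →ₗ[F2] (⋀[F2]^i V) ⊗[F2] (⋀[F2]^j V)}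
    (hDθ : IsDTheta i j 1 ha hb Dθ) (x : Fin a → V) (y : Fin b → V) :
    Dθ (wedge a x ⊗ₜ wedge b y) =
      ∑ s : Fin a,
        wedge i (fun k => x (cEnum s ⟨(k:ℕ), by omega⟩)) ⊗ₜ
        wedge j (fun m => if h : (m:ℕ) < b then y ⟨m, h⟩ else x s) := by
  rw [hDθ x y, sum_powersetCard_one]
  apply Finset.sum_congr rfl
  intro s _
  congr 1
  · congr 1
    funext k
    simp only [Function.comp_apply]
    rw [orderEmbOfFin_compl_singleton]
    exact congrArg x (congrArg (cEnum s) (Fin.ext (by simp)))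
  · congr 1
    funext m
    simp only [Function.comp_apply]
    rw [append_apply]
    simp only [Fin.coe_cast, Function.comp_apply]
    split
    · rfl
    · congr 1
      have := Finset.orderEmbOfFin_mem ({s} : Finset (Fin a))
        (Finset.mem_powersetCard.mp (show ({s} : Finset (Fin a))
          ∈ Finset.powersetCard 1 Finset.univ by simp)).2
        ⟨(m : ℕ) - b, by omega⟩
      simpa using this

end PiAux

open PiAux

set_option maxHeartbeats 4000000
set_option synthInstance.maxHeartbeats 1000000

/-- For `i ≥ j ≥ 1`,
`Π_{i,j} + Π′_{i,j} = (i + j) · id` as endomorphisms of `Λ^i(V) ⊗ Λ^j(V)`, where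
`Π_{i,j} = θ_{i−1,j+1,1} ∘ Dθ_{i−1,j+1,1}`, `Π′_{i,j} = Dθ_{i,j,1} ∘ θ_{i,j,1}`, and the
natural number `i + j` acts mod 2. -/
theorem pi_add_pi' {V : Type*} [AddCommGroup V] [Module F2 V]
    (i j : ℕ) (hj : 1 ≤ j) (hij : j ≤ i)
    (θ₁ : (⋀[F2]^(i - 1) V) ⊗[F2] (⋀[F2]^(j + 1) V) →ₗ[F2] (⋀[F2]^i V) ⊗[F2] (⋀[F2]^j V))
    (hθ₁ : IsTheta (i - 1) (j + 1) 1 (by omega) (by omega) θ₁)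
    (Dθ₁ : (⋀[F2]^i V) ⊗[F2] (⋀[F2]^j V) →ₗ[F2] (⋀[F2]^(i - 1) V) ⊗[F2] (⋀[F2]^(j + 1) V))
    (hDθ₁ : IsDTheta (i - 1) (j + 1) 1 (by omega) (by omega) Dθ₁)
    (θ₂ : (⋀[F2]^i V) ⊗[F2] (⋀[F2]^j V) →ₗ[F2] (⋀[F2]^(i + 1) V) ⊗[F2] (⋀[F2]^(j - 1) V))
    (hθ₂ : IsTheta i j 1 rfl rfl θ₂)
    (Dθ₂ : (⋀[F2]^(i + 1) V) ⊗[F2] (⋀[F2]^(j - 1) V) →ₗ[F2] (⋀[F2]^i V) ⊗[F2] (⋀[F2]^j V))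
    (hDθ₂ : IsDTheta i j 1 rfl (by omega) Dθ₂) :
    θ₁ ∘ₗ Dθ₁ + Dθ₂ ∘ₗ θ₂ = ((i + j : ℕ) : F2) • LinearMap.id := by
  have hi : 1 ≤ i := hj.trans hij
  apply tensor_ext
  intro x y
  simp only [LinearMap.add_apply, LinearMap.comp_apply, LinearMap.smul_apply,
    LinearMap.id_apply]
  have twoz : ∀ z : (⋀[F2]^i V) ⊗[F2] (⋀[F2]^j V), z + z = 0 := by
    intro z
    have h2 := two_smul F2 z
    have h0 : (2 : F2) = 0 := rfl
    rw [h0, zero_smul] at h2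
    exact h2.symm
  have hP : θ₁ (Dθ₁ (wedge i x ⊗ₜ[F2] wedge j y)) = (∑ s : Fin i, ∑ t : Fin j,
      wedge i (Cf x y s t) ⊗ₜ[F2] wedge j (Cf y x t s))
        + i • (wedge i x ⊗ₜ[F2] wedge j y) := by
    rw [isDTheta_one_apply _ _ hDθ₁ x y, map_sum]
    have h1 : ∀ s : Fin i, θ₁ (wedge (i-1) (Xf x s) ⊗ₜ[F2] wedge (j+1) (Yf x y s))
        = (∑ t : Fin j, wedge i (Cf x y s t) ⊗ₜ[F2] wedge j (Cf y x t s))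
            + (wedge i x ⊗ₜ[F2] wedge j y) := by
      intro s
      rw [isTheta_one_apply _ _ (by omega) hθ₁ (Xf x s) (Yf x y s),
        Fin.sum_univ_castSucc]
      congr 1
      · refine Finset.sum_congr rfl fun t _ => ?_
        exact congrArg₂ (· ⊗ₜ[F2] ·) (congrArg (wedge i) (fun1 x y s t))
          (congrArg (wedge j) (fun2 x y s t (fun m => ⟨(m:ℕ), by omega⟩) (fun m => rfl)))
      · exact congrArg₂ (· ⊗ₜ[F2] ·)
          ((congrArg (wedge i) (fun3 x y s)).trans
            (wedge_comp_bijective x (sigma1 s) (sigma1_bij s)))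
          (congrArg (wedge j) (fun4 x y s (fun m => ⟨(m:ℕ), by omega⟩) (fun m => rfl)))
    refine Eq.trans (Finset.sum_congr rfl fun s _ => h1 s) ?_
    rw [Finset.sum_add_distrib, Finset.sum_const, Finset.card_univ, Fintype.card_fin]
  have hQ : Dθ₂ (θ₂ (wedge i x ⊗ₜ[F2] wedge j y)) = (∑ t : Fin j, ∑ s : Fin i,
      wedge i (Cf x y s t) ⊗ₜ[F2] wedge j (Cf y x t s))
        + j • (wedge i x ⊗ₜ[F2] wedge j y) := by
    rw [isTheta_one_apply rfl rfl hj hθ₂ x y, map_sum]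
    have h1 : ∀ t : Fin j, Dθ₂ (wedge (i+1) (Yf y x t) ⊗ₜ[F2] wedge (j-1) (Xf y t))
        = (∑ s : Fin i, wedge i (Cf x y s t) ⊗ₜ[F2] wedge j (Cf y x t s))
            + (wedge i x ⊗ₜ[F2] wedge j y) := by
      intro t
      rw [isDTheta_one_apply _ _ hDθ₂ (Yf y x t) (Xf y t), Fin.sum_univ_castSucc]
      congr 1
      · refine Finset.sum_congr rfl fun s _ => ?_
        exact congrArg₂ (· ⊗ₜ[F2] ·)
          (congrArg (wedge i) (fun2 y x t s (fun k => ⟨(k:ℕ), by omega⟩) (fun k => rfl)))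
          (congrArg (wedge j) (fun1 y x t s))
      · exact congrArg₂ (· ⊗ₜ[F2] ·)
          (congrArg (wedge i) (fun4 y x t (fun k => ⟨(k:ℕ), by omega⟩) (fun k => rfl)))
          ((congrArg (wedge j) (fun3 y x t)).trans
            (wedge_comp_bijective y (sigma1 t) (sigma1_bij t)))
    refine Eq.trans (Finset.sum_congr rfl fun t _ => h1 t) ?_
    rw [Finset.sum_add_distrib, Finset.sum_const, Finset.card_univ, Fintype.card_fin]
  rw [hP, hQ]
  rw [show (∑ t : Fin j, ∑ s : Fin i,
      wedge i (Cf x y s t) ⊗ₜ[F2] wedge j (Cf y x t s))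
      = ∑ s : Fin i, ∑ t : Fin j,
      wedge i (Cf x y s t) ⊗ₜ[F2] wedge j (Cf y x t s) from Finset.sum_comm]
  set A := ∑ s : Fin i, ∑ t : Fin j,
      wedge i (Cf x y s t) ⊗ₜ[F2] wedge j (Cf y x t s) with hA
  set c := wedge i x ⊗ₜ[F2] wedge j y with hc
  calc (A + i • c) + (A + j • c) = (A + A) + ((i + j) • c) := by
        rw [add_nsmul]; abel
    _ = ((i + j : ℕ) : F2) • c := by
        rw [twoz A, zero_add, Nat.cast_smul_eq_nsmul]


end
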